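/- Let ω ∈ ℂ be a primitive cube root of unity and let f, g be arbitrary polynomials in ℂ[a, b, c]. In the polynomial ring ℂ[a, b, c, x, y, z, w], set F1 := y^3 − ω·x^2·w + (1 − ω)·x·y·z − f and F2 := z^3 − ω^2·x·w^2 − (1 − ω)·x·y·z − g. Then F1 and F2 have no common non-unit factor (every polynomial dividing both F1 and F2 is a nonzero constant); in particular F1, F2 form a regular sequence, so the quotient ℂ[a, b, c, x, y, z, w]/(F1, F2) is a complete intersection. -/

import Mathlib

open MvPolynomial

noncomputable def e2aux : MvPolynomial (Fin 6) ℂ ≃ₐ[ℂ] Polynomial (MvPolynomial (Fin 5) ℂ) :=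
  (renameEquiv ℂ (Equiv.swap 0 4)).trans (MvPolynomial.finSuccEquiv ℂ 5)

noncomputable def e1aux : MvPolynomial (Fin 7) ℂ ≃ₐ[ℂ] Polynomial (MvPolynomial (Fin 6) ℂ) :=
  (renameEquiv ℂ (finRotate 7)).trans (MvPolynomial.finSuccEquiv ℂ 6)

noncomputable def Ap (ω : ℂ) : MvPolynomial (Fin 6) ℂ := -(C ω * X 3 ^ 2)
noncomputable def Bp (ω : ℂ) (f : MvPolynomial (Fin 3) ℂ) : MvPolynomial (Fin 6) ℂ :=
  X 4 ^ 3 + (1 - C ω) * X 3 * X 4 * X 5 - rename (Fin.castLE (by norm_num)) f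
noncomputable def A2p (ω : ℂ) : MvPolynomial (Fin 6) ℂ := -(C (ω ^ 2) * X 3)
noncomputable def B2p (ω : ℂ) (g : MvPolynomial (Fin 3) ℂ) : MvPolynomial (Fin 6) ℂ :=
  X 5 ^ 3 - (1 - C ω) * X 3 * X 4 * X 5 - rename (Fin.castLE (by norm_num)) g

namespace Stmt19

lemma e2_X4 : e2aux (X 4) = Polynomial.X := by
  simp [e2aux, renameEquiv_apply, MvPolynomial.finSuccEquiv_X_zero]
lemma e2_Xs (j : Fin 5) : e2aux (X ((Equiv.swap (0:Fin 6) 4).symm j.succ)) = Polynomial.C (X j) := by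
  simp only [e2aux, AlgEquiv.trans_apply, renameEquiv_apply, rename_X, Equiv.apply_symm_apply,
    MvPolynomial.finSuccEquiv_X_succ]
lemma e2_X3 : e2aux (X 3) = Polynomial.C (X 2) := by
  have := e2_Xs 2; rw [show ((Equiv.swap (0:Fin 6) 4).symm (Fin.succ 2)) = 3 by decide] at this
  exact this
lemma e2_X5 : e2aux (X 5) = Polynomial.C (X 4) := by
  have := e2_Xs 4; rw [show ((Equiv.swap (0:Fin 6) 4).symm (Fin.succ 4)) = 5 by decide] at this
  exact this
lemma e2_X0 : e2aux (X 0) = Polynomial.C (X 3) := by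
  have := e2_Xs 3; rw [show ((Equiv.swap (0:Fin 6) 4).symm (Fin.succ 3)) = 0 by decide] at this
  exact this
lemma e2_X1 : e2aux (X 1) = Polynomial.C (X 0) := by
  have := e2_Xs 0; rw [show ((Equiv.swap (0:Fin 6) 4).symm (Fin.succ 0)) = 1 by decide] at this
  exact this
lemma e2_X2 : e2aux (X 2) = Polynomial.C (X 1) := by
  have := e2_Xs 1; rw [show ((Equiv.swap (0:Fin 6) 4).symm (Fin.succ 1)) = 2 by decide] at this
  exact this
lemma e2_C (c : ℂ) : e2aux (C c) = Polynomial.C (C c) := by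
  simp [e2aux, renameEquiv_apply, MvPolynomial.finSuccEquiv_apply]

lemma e1_X6 : e1aux (X 6) = Polynomial.X := by
  simp [e1aux, renameEquiv_apply, MvPolynomial.finSuccEquiv_X_zero]
lemma e1_Xc (i : Fin 6) : e1aux (X i.castSucc) = Polynomial.C (X i) := by
  simp only [e1aux, AlgEquiv.trans_apply, renameEquiv_apply, rename_X]
  rw [show (finRotate 7) i.castSucc = i.succ by simp [finRotate_succ_apply, Fin.coeSucc_eq_succ],
    MvPolynomial.finSuccEquiv_X_succ]
lemma e1_X3 : e1aux (X 3) = Polynomial.C (X 3) := e1_Xc 3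
lemma e1_X4 : e1aux (X 4) = Polynomial.C (X 4) := e1_Xc 4
lemma e1_X5 : e1aux (X 5) = Polynomial.C (X 5) := e1_Xc 5
lemma e1_C (c : ℂ) : e1aux (C c) = Polynomial.C (C c) := by
  simp [e1aux, renameEquiv_apply, MvPolynomial.finSuccEquiv_apply]

lemma comp_rename {n m l : ℕ} (e : MvPolynomial (Fin n) ℂ ≃ₐ[ℂ] Polynomial (MvPolynomial (Fin m) ℂ))
    (k : Fin l → Fin n) (k' : Fin l → Fin m)
    (h : ∀ i, e (X (k i)) = Polynomial.C (X (k' i))) (f : MvPolynomial (Fin l) ℂ) :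
    e (rename k f) = Polynomial.C (rename k' f) := by
  have : (e.toAlgHom.comp (rename k) : MvPolynomial (Fin l) ℂ →ₐ[ℂ] _)
      = (Polynomial.CAlgHom.comp (rename k')) := by
    apply MvPolynomial.algHom_ext
    intro i
    simp [h i, Polynomial.CAlgHom]
  calc e (rename k f) = (e.toAlgHom.comp (rename k)) f := rfl
    _ = (Polynomial.CAlgHom.comp (rename k')) f := by rw [this]
    _ = Polynomial.C (rename k' f) := rfl

lemma e2_rename (f : MvPolynomial (Fin 3) ℂ) :
    e2aux (rename (Fin.castLE (by norm_num)) f) = Polynomial.C (rename ![3,0,1] f) :=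
  comp_rename e2aux _ _ (by
    intro i
    fin_cases i
    · exact e2_X0
    · exact e2_X1
    · exact e2_X2) f

lemma e1_rename (f : MvPolynomial (Fin 3) ℂ) :
    e1aux (rename (Fin.castLE (by norm_num)) f)
      = Polynomial.C (rename (Fin.castLE (by norm_num)) f) :=
  comp_rename e1aux _ _ (by
    intro i
    fin_cases i
    · exact e1_Xc 0
    · exact e1_Xc 1
    · exact e1_Xc 2) f

/-- The core coprimality lemma in 6 variables. -/
lemma core (ω : ℂ) (hω : ω ≠ 0) (f : MvPolynomial (Fin 3) ℂ) (d : MvPolynomial (Fin 6) ℂ)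
    (hdA : d ∣ C ω * X 3 ^ 2)
    (hdB : d ∣ Bp ω f) :
    IsUnit d := by
  rw [Bp] at hdB
  obtain ⟨q, hq⟩ := hdA
  obtain ⟨r, hr⟩ := hdB
  have hqA : e2aux d * e2aux q = Polynomial.C (C ω * X 2 ^ 2) := by
    rw [← map_mul, ← hq, map_mul, map_pow, e2_C, e2_X3, ← map_pow, ← map_mul]
  have hCne : (Polynomial.C (C ω * X 2 ^ 2) : Polynomial (MvPolynomial (Fin 5) ℂ)) ≠ 0 := by
    simp only [ne_eq, Polynomial.C_eq_zero, mul_eq_zero, not_or]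
    exact ⟨by simpa using hω, pow_ne_zero _ (MvPolynomial.X_ne_zero 2)⟩
  have hd0 : e2aux d ≠ 0 := fun h => hCne (by rw [← hqA, h, zero_mul])
  have hq0 : e2aux q ≠ 0 := fun h => hCne (by rw [← hqA, h, mul_zero])
  have hdeg : (e2aux d).natDegree = 0 := by
    have := Polynomial.natDegree_mul hd0 hq0
    rw [hqA, Polynomial.natDegree_C] at this
    omega
  obtain ⟨d1, hd1⟩ := Polynomial.natDegree_eq_zero.mp hdeg
  have hrB : Polynomial.C d1 * e2aux r
      = Polynomial.X ^ 3 + Polynomial.C ((1 - C ω) * (X 2 * X 4)) * Polynomial.X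
        - Polynomial.C (rename ![3,0,1] f) := by
    rw [hd1, ← map_mul, ← hr, map_sub, map_add, map_pow, e2_X4]
    rw [show ((1 - C ω) * X 3 * X 4 * X 5 : MvPolynomial (Fin 6) ℂ)
      = (1 - C ω) * X 3 * X 5 * X 4 by ring]
    rw [map_mul, map_mul, map_mul, map_sub, map_one, e2_C, e2_X3, e2_X5, e2_X4, e2_rename]
    simp only [Polynomial.C_mul, Polynomial.C_sub, Polynomial.C_1]
    ring
  have hc3 : d1 * (e2aux r).coeff 3 = 1 := by
    have := congrArg (fun p => Polynomial.coeff p 3) hrB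
    simp only [Polynomial.coeff_add, Polynomial.coeff_sub, Polynomial.coeff_X_pow,
      Polynomial.coeff_C_mul, Polynomial.coeff_X, Polynomial.coeff_C] at this
    simpa using this
  have hd1u : IsUnit d1 := IsUnit.of_mul_eq_one _ hc3
  have hDu : IsUnit (e2aux d) := hd1 ▸ Polynomial.isUnit_C.mpr hd1u
  have h2 := hDu.map (e2aux.symm : Polynomial (MvPolynomial (Fin 5) ℂ) ≃ₐ[ℂ] _)
  simpa using h2

lemma e1_F1 (ω : ℂ) (f : MvPolynomial (Fin 3) ℂ) :
    e1aux (X 4 ^ 3 - C ω * X 3 ^ 2 * X 6 + (1 - C ω) * X 3 * X 4 * X 5 -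
        rename (Fin.castLE (by norm_num)) f)
      = Polynomial.C (Ap ω) * Polynomial.X + Polynomial.C (Bp ω f) := by
  rw [Ap, Bp]
  simp only [map_sub, map_add, map_mul, map_pow, map_one, map_neg, e1_X3, e1_X4, e1_X5, e1_X6,
    e1_C, e1_rename, Polynomial.C_mul, Polynomial.C_sub, Polynomial.C_add, Polynomial.C_pow,
    Polynomial.C_neg, Polynomial.C_1]
  ring

lemma e1_F2 (ω : ℂ) (g : MvPolynomial (Fin 3) ℂ) :
    e1aux (X 5 ^ 3 - C (ω ^ 2) * X 3 * X 6 ^ 2 - (1 - C ω) * X 3 * X 4 * X 5 -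
        rename (Fin.castLE (by norm_num)) g)
      = Polynomial.C (A2p ω) * Polynomial.X ^ 2 + Polynomial.C (B2p ω g) := by
  rw [A2p, B2p]
  simp only [map_sub, map_add, map_mul, map_pow, map_one, map_neg, e1_X3, e1_X4, e1_X5, e1_X6,
    e1_C, e1_rename, Polynomial.C_mul, Polynomial.C_sub, Polynomial.C_add, Polynomial.C_pow,
    Polynomial.C_neg, Polynomial.C_1]
  ring

lemma hMtest (cf cg : ℂ) :
    (Polynomial.X ^ 3 - Polynomial.C cf) ^ 2 + Polynomial.C cg ≠ (0 : Polynomial ℂ) := by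
  have hm0 : (Polynomial.X ^ 3 - Polynomial.C cf : Polynomial ℂ).Monic :=
    Polynomial.monic_X_pow_sub_C cf (by norm_num)
  refine ((hm0.pow 2).add_of_left ?_).ne_zero
  rw [Polynomial.degree_eq_natDegree (hm0.pow 2).ne_zero, hm0.natDegree_pow,
    Polynomial.natDegree_X_pow_sub_C]
  exact Polynomial.degree_C_le.trans_lt (by norm_num)

/-- The eliminant `G0` is nonzero. -/
lemma G0_ne_zero (ω : ℂ) (hω : ω ≠ 0) (f g : MvPolynomial (Fin 3) ℂ) :
    A2p ω * Bp ω f ^ 2 + Ap ω ^ 2 * B2p ω g ≠ (0 : MvPolynomial (Fin 6) ℂ) := by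
  rw [Ap, Bp, A2p, B2p]
  intro h0
  set v : Fin 6 → Polynomial ℂ := ![0, 0, 0, 1, Polynomial.X, 0] with hv
  have hren : ∀ p : MvPolynomial (Fin 3) ℂ,
      aeval v (rename (Fin.castLE (show (3:ℕ) ≤ 6 by norm_num)) p)
        = Polynomial.C (constantCoeff p) := by
    intro p
    rw [aeval_rename]
    have hc : (v ∘ Fin.castLE (show (3:ℕ) ≤ 6 by norm_num)) = 0 := by
      funext i; fin_cases i <;> rfl
    rw [hc, aeval_zero, Polynomial.algebraMap_eq]
  have h := congrArg (aeval v) h0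
  simp only [map_add, map_mul, map_pow, map_sub, map_neg, map_one, aeval_X, aeval_C, map_zero,
    hren, Polynomial.algebraMap_eq] at h
  have hv3 : v 3 = 1 := rfl
  have hv4 : v 4 = Polynomial.X := rfl
  have hv5 : v 5 = 0 := rfl
  rw [hv3, hv4, hv5] at h
  have hkey : (Polynomial.C ω) ^ 2 *
      ((Polynomial.X ^ 3 - Polynomial.C (constantCoeff f)) ^ 2
        + Polynomial.C (constantCoeff g)) = 0 := by
    linear_combination -h
  rcases mul_eq_zero.mp hkey with h1 | h2
  · have : (Polynomial.C ω : Polynomial ℂ) = 0 := by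
      simpa using pow_eq_zero_iff (n := 2) (by norm_num) |>.mp h1
    exact hω (by simpa using this)
  · exact hMtest (constantCoeff f) (constantCoeff g) h2

/-- A constant factor of `C (Ap ω) * X + C (Bp ω f)` is a unit. -/
lemma const_factor (ω : ℂ) (hω : ω ≠ 0) (f : MvPolynomial (Fin 3) ℂ)
    (c : MvPolynomial (Fin 6) ℂ) (p : Polynomial (MvPolynomial (Fin 6) ℂ))
    (hc : Polynomial.C c * p = Polynomial.C (Ap ω) * Polynomial.X + Polynomial.C (Bp ω f)) :
    IsUnit c := by
  have h1 : c * p.coeff 1 = Ap ω := by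
    have := congrArg (fun q => Polynomial.coeff q 1) hc
    simpa [Polynomial.coeff_C_mul, Polynomial.coeff_C] using this
  have h0 : c * p.coeff 0 = Bp ω f := by
    have := congrArg (fun q => Polynomial.coeff q 0) hc
    simpa [Polynomial.coeff_C_mul, Polynomial.coeff_C] using this
  refine core ω hω f c ?_ ⟨p.coeff 0, h0.symm⟩
  have hdA : c ∣ Ap ω := ⟨p.coeff 1, h1.symm⟩
  rw [Ap] at hdA
  exact dvd_neg.mp hdA

/-- The image of `F1` is irreducible. -/
lemma P1_irred (ω : ℂ) (hω : ω ≠ 0) (f : MvPolynomial (Fin 3) ℂ) :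
    Irreducible (Polynomial.C (Ap ω) * Polynomial.X + Polynomial.C (Bp ω f)) := by
  have hA : Ap ω ≠ 0 := by
    rw [Ap]
    refine neg_ne_zero.mpr (mul_ne_zero ?_ (pow_ne_zero _ (MvPolynomial.X_ne_zero 3)))
    simpa using hω
  have hdeg : (Polynomial.C (Ap ω) * Polynomial.X + Polynomial.C (Bp ω f)).natDegree = 1 :=
    Polynomial.natDegree_linear hA
  constructor
  · intro hu
    have := Polynomial.natDegree_eq_zero_of_isUnit hu
    omega
  · intro u v huv
    have hne : (Polynomial.C (Ap ω) * Polynomial.X + Polynomial.C (Bp ω f)) ≠ 0 := by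
      intro h; rw [h] at hdeg; simp at hdeg
    have hu0 : u ≠ 0 := fun h => hne (by rw [huv, h, zero_mul])
    have hv0 : v ≠ 0 := fun h => hne (by rw [huv, h, mul_zero])
    have hsum : u.natDegree + v.natDegree = 1 := by
      rw [← Polynomial.natDegree_mul hu0 hv0, ← huv, hdeg]
    rcases Nat.eq_zero_or_pos u.natDegree with h | h
    · left
      obtain ⟨c, hcu⟩ := Polynomial.natDegree_eq_zero.mp h
      have := const_factor ω hω f c v (by rw [hcu, ← huv])
      exact hcu ▸ Polynomial.isUnit_C.mpr this
    · right
      have hvdeg : v.natDegree = 0 := by omega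
      obtain ⟨c, hcv⟩ := Polynomial.natDegree_eq_zero.mp hvdeg
      have := const_factor ω hω f c u (by rw [hcv, mul_comm, ← huv])
      exact hcv ▸ Polynomial.isUnit_C.mpr this

/-- Common divisors of `F1`, `F2` are units. -/
lemma common (ω : ℂ) (hω : ω ≠ 0) (f g : MvPolynomial (Fin 3) ℂ)
    (d : MvPolynomial (Fin 7) ℂ)
    (hd1 : d ∣ X 4 ^ 3 - C ω * X 3 ^ 2 * X 6 + (1 - C ω) * X 3 * X 4 * X 5 -
        rename (Fin.castLE (by norm_num)) f)
    (hd2 : d ∣ X 5 ^ 3 - C (ω ^ 2) * X 3 * X 6 ^ 2 - (1 - C ω) * X 3 * X 4 * X 5 -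
        rename (Fin.castLE (by norm_num)) g) :
    IsUnit d := by
  obtain ⟨u, hu⟩ := hd1
  obtain ⟨w, hw⟩ := hd2
  have hP1 : e1aux d * e1aux u = Polynomial.C (Ap ω) * Polynomial.X + Polynomial.C (Bp ω f) := by
    rw [← map_mul, ← hu, e1_F1]
  have hP2 : e1aux d * e1aux w
      = Polynomial.C (A2p ω) * Polynomial.X ^ 2 + Polynomial.C (B2p ω g) := by
    rw [← map_mul, ← hw, e1_F2]
  have hdvd1 : e1aux d ∣ Polynomial.C (Ap ω) * Polynomial.X + Polynomial.C (Bp ω f) :=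
    ⟨e1aux u, hP1.symm⟩
  have hdvd2 : e1aux d ∣ Polynomial.C (A2p ω) * Polynomial.X ^ 2 + Polynomial.C (B2p ω g) :=
    ⟨e1aux w, hP2.symm⟩
  have hG : e1aux d ∣ Polynomial.C (A2p ω * Bp ω f ^ 2 + Ap ω ^ 2 * B2p ω g) := by
    have key : Polynomial.C (A2p ω * Bp ω f ^ 2 + Ap ω ^ 2 * B2p ω g)
        = Polynomial.C (Ap ω ^ 2)
            * (Polynomial.C (A2p ω) * Polynomial.X ^ 2 + Polynomial.C (B2p ω g))
          - (Polynomial.C (A2p ω) * (Polynomial.C (Ap ω) * Polynomial.X - Polynomial.C (Bp ω f)))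
            * (Polynomial.C (Ap ω) * Polynomial.X + Polynomial.C (Bp ω f)) := by
      simp only [Polynomial.C_mul, Polynomial.C_add, Polynomial.C_pow]
      ring
    rw [key]
    exact dvd_sub (hdvd2.mul_left _) (hdvd1.mul_left _)
  have hGne : Polynomial.C (A2p ω * Bp ω f ^ 2 + Ap ω ^ 2 * B2p ω g)
      ≠ (0 : Polynomial (MvPolynomial (Fin 6) ℂ)) := by
    rw [ne_eq, Polynomial.C_eq_zero]
    exact G0_ne_zero ω hω f g
  obtain ⟨t, ht⟩ := hG
  have hd0 : e1aux d ≠ 0 := fun h => hGne (by rw [ht, h, zero_mul])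
  have ht0 : t ≠ 0 := fun h => hGne (by rw [ht, h, mul_zero])
  have hdeg : (e1aux d).natDegree = 0 := by
    have := Polynomial.natDegree_mul hd0 ht0
    rw [← ht, Polynomial.natDegree_C] at this
    omega
  obtain ⟨d0, hd0eq⟩ := Polynomial.natDegree_eq_zero.mp hdeg
  have hu0 : IsUnit d0 := const_factor ω hω f d0 (e1aux u) (by rw [hd0eq, hP1])
  have hDu : IsUnit (e1aux d) := hd0eq ▸ Polynomial.isUnit_C.mpr hu0
  have h2 := hDu.map (e1aux.symm : Polynomial (MvPolynomial (Fin 6) ℂ) ≃ₐ[ℂ] _)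
  simpa using h2

end Stmt19

open MvPolynomial Pointwise

/-- For a primitive cube root of unity `ω` and arbitrary `f, g ∈ ℂ[a, b, c]`, the
polynomials `F1 = y³ − ω x² w + (1−ω) x y z − f` and
`F2 = z³ − ω² x w² − (1−ω) x y z − g` in `ℂ[a, b, c, x, y, z, w]`
(variables `a = X 0`, `b = X 1`, `c = X 2`, `x = X 3`, `y = X 4`, `z = X 5`, `w = X 6`)
have no common non-unit factor; in particular `F1, F2` form a regular sequence. -/
theorem stmt_19 (ω : ℂ) (hω : IsPrimitiveRoot ω 3) (f g : MvPolynomial (Fin 3) ℂ)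
    (F1 F2 : MvPolynomial (Fin 7) ℂ)
    (hF1 : F1 = X 4 ^ 3 - C ω * X 3 ^ 2 * X 6 + (1 - C ω) * X 3 * X 4 * X 5 -
      rename (Fin.castLE (by norm_num)) f)
    (hF2 : F2 = X 5 ^ 3 - C (ω ^ 2) * X 3 * X 6 ^ 2 - (1 - C ω) * X 3 * X 4 * X 5 -
      rename (Fin.castLE (by norm_num)) g) :
    (∀ d : MvPolynomial (Fin 7) ℂ, d ∣ F1 → d ∣ F2 → IsUnit d) ∧
      RingTheory.Sequence.IsRegular (MvPolynomial (Fin 7) ℂ) [F1, F2] := by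
  have hω0 : ω ≠ 0 := hω.ne_zero (by norm_num)
  have hcommon : ∀ d : MvPolynomial (Fin 7) ℂ, d ∣ F1 → d ∣ F2 → IsUnit d := by
    intro d h1 h2
    exact Stmt19.common ω hω0 f g d (hF1 ▸ h1) (hF2 ▸ h2)
  refine ⟨hcommon, ?_⟩
  have hprime : Prime F1 := by
    have hpr : Prime (e1aux F1) := by
      rw [UniqueFactorizationMonoid.irreducible_iff_prime.symm, hF1, Stmt19.e1_F1]
      exact Stmt19.P1_irred ω hω0 f
    exact (MulEquiv.prime_iff e1aux).mp hpr
  have hF1ne : F1 ≠ 0 := hprime.ne_zero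
  have hndvd : ¬ F1 ∣ F2 := fun h => hprime.not_unit (hcommon F1 dvd_rfl h)
  have hmem : ∀ t : MvPolynomial (Fin 7) ℂ,
      t ∈ (F1 • ⊤ : Submodule (MvPolynomial (Fin 7) ℂ) (MvPolynomial (Fin 7) ℂ)) ↔ F1 ∣ t := by
    intro t
    constructor
    · intro ht
      rw [← SetLike.mem_coe, Submodule.coe_pointwise_smul] at ht
      obtain ⟨y, -, hy⟩ := ht
      exact ⟨y, hy.symm⟩
    · rintro ⟨y, rfl⟩
      exact Submodule.smul_mem_pointwise_smul y F1 ⊤ trivial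
  rw [RingTheory.Sequence.isRegular_iff]
  constructor
  · rw [RingTheory.Sequence.isWeaklyRegular_cons_iff]
    constructor
    · intro a b hab
      exact mul_left_cancel₀ hF1ne (by simpa [smul_eq_mul] using hab)
    · rw [RingTheory.Sequence.isWeaklyRegular_cons_iff]
      refine ⟨?_, RingTheory.Sequence.IsWeaklyRegular.nil _ _⟩
      rw [isSMulRegular_quotient_iff_mem_of_smul_mem]
      intro s hs
      rw [hmem] at hs ⊢
      rw [smul_eq_mul] at hs
      rcases hprime.2.2 _ _ hs with h | h
      · exact absurd h hndvd
      · exact h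
  · intro htop
    obtain ⟨ya, hya⟩ := IsAlgClosed.exists_pow_nat_eq (eval (fun _ => (0:ℂ)) f) (n := 3)
      (by norm_num)
    obtain ⟨za, hza⟩ := IsAlgClosed.exists_pow_nat_eq (eval (fun _ => (0:ℂ)) g) (n := 3)
      (by norm_num)
    set vv : Fin 7 → ℂ := ![0, 0, 0, 0, ya, za, 0] with hvv
    have hvcomp : ∀ p : MvPolynomial (Fin 3) ℂ,
        eval vv (rename (Fin.castLE (show (3:ℕ) ≤ 7 by norm_num)) p)
          = eval (fun _ => (0:ℂ)) p := by
      intro p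
      rw [eval_rename]
      have hc0 : (vv ∘ Fin.castLE (show (3:ℕ) ≤ 7 by norm_num)) = (fun _ => (0:ℂ)) := by
        funext i; fin_cases i <;> rfl
      rw [hc0]
    have hev1 : eval vv F1 = 0 := by
      rw [hF1]
      simp only [map_sub, map_add, map_mul, map_pow, map_one, eval_X, eval_C, hvcomp]
      have h3 : vv 3 = 0 := rfl
      have h4 : vv 4 = ya := rfl
      have h6 : vv 6 = 0 := rfl
      rw [h3, h4, h6, hya]
      ring
    have hev2 : eval vv F2 = 0 := by
      rw [hF2]
      simp only [map_sub, map_add, map_mul, map_pow, map_one, eval_X, eval_C, hvcomp]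
      have h3 : vv 3 = 0 := rfl
      have h5 : vv 5 = za := rfl
      rw [h3, h5, hza]
      ring
    have hker : Ideal.ofList [F1, F2] ≤ RingHom.ker (eval vv) := by
      rw [Ideal.span_le]
      rintro r hr
      simp only [Set.mem_setOf_eq, List.mem_cons, List.mem_singleton] at hr
      rcases hr with rfl | rfl | h
      · exact hev1
      · exact hev2
      · exact absurd h List.not_mem_nil
    have hle : (Ideal.ofList [F1, F2] • ⊤ :
        Submodule (MvPolynomial (Fin 7) ℂ) (MvPolynomial (Fin 7) ℂ))
          ≤ (RingHom.ker (eval vv) : Ideal (MvPolynomial (Fin 7) ℂ)) := by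
      refine Submodule.smul_le.mpr ?_
      intro r hr n _
      rw [smul_eq_mul]
      exact Ideal.mul_mem_right n _ (hker hr)
    have h1 : (1 : MvPolynomial (Fin 7) ℂ) ∈ (⊤ :
        Submodule (MvPolynomial (Fin 7) ℂ) (MvPolynomial (Fin 7) ℂ)) := trivial
    rw [htop] at h1
    have := hle h1
    rw [RingHom.mem_ker, map_one] at this
    exact one_ne_zero this
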